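/- arXiv:0708.2666 — 5 statements merged into one kernel-verified Lean document; each statement's English description precedes it below -/
import Mathlib

section
/- Let a, b > 0 with a > b (more generally a·e^x - b·e^y > 0 on the domain considered). The function f(x, y) = log(a·e^x - b·e^y), defined on the open set where a·e^x > b·e^y, is concave. -/
open Real

/-- Superadditivity of the weighted geometric mean. -/
lemma geom_mean_superadd {s t C1 C2 B1 B2 : ℝ} (hs : 0 ≤ s) (ht : 0 ≤ t) (hst : s + t = 1)
    (hC1 : 0 < C1) (hC2 : 0 < C2) (hB1 : 0 < B1) (hB2 : 0 < B2) :
    C1 ^ s * C2 ^ t + B1 ^ s * B2 ^ t ≤ (C1 + B1) ^ s * (C2 + B2) ^ t := by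
  have hD1 : 0 < C1 + B1 := by linarith
  have hD2 : 0 < C2 + B2 := by linarith
  have h1 : (C1 / (C1 + B1)) ^ s * (C2 / (C2 + B2)) ^ t
      ≤ s * (C1 / (C1 + B1)) + t * (C2 / (C2 + B2)) :=
    Real.geom_mean_le_arith_mean2_weighted hs ht (by positivity) (by positivity) hst
  have h2 : (B1 / (C1 + B1)) ^ s * (B2 / (C2 + B2)) ^ t
      ≤ s * (B1 / (C1 + B1)) + t * (B2 / (C2 + B2)) :=
    Real.geom_mean_le_arith_mean2_weighted hs ht (by positivity) (by positivity) hst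
  rw [Real.div_rpow hC1.le hD1.le, Real.div_rpow hC2.le hD2.le] at h1
  rw [Real.div_rpow hB1.le hD1.le, Real.div_rpow hB2.le hD2.le] at h2
  have hD1s : (0:ℝ) < (C1 + B1) ^ s := Real.rpow_pos_of_pos hD1 s
  have hD2t : (0:ℝ) < (C2 + B2) ^ t := Real.rpow_pos_of_pos hD2 t
  have hsum := add_le_add h1 h2
  have hrhs : s * (C1 / (C1 + B1)) + t * (C2 / (C2 + B2)) +
      (s * (B1 / (C1 + B1)) + t * (B2 / (C2 + B2))) = 1 := by
    have e1 : C1 / (C1 + B1) + B1 / (C1 + B1) = 1 := by field_simp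
    have e2 : C2 / (C2 + B2) + B2 / (C2 + B2) = 1 := by field_simp
    calc s * (C1 / (C1 + B1)) + t * (C2 / (C2 + B2)) +
        (s * (B1 / (C1 + B1)) + t * (B2 / (C2 + B2)))
        = s * (C1 / (C1 + B1) + B1 / (C1 + B1)) + t * (C2 / (C2 + B2) + B2 / (C2 + B2)) := by
          ring
      _ = s * 1 + t * 1 := by rw [e1, e2]
      _ = 1 := by linarith
  rw [hrhs] at hsum
  have hmul := mul_le_mul_of_nonneg_right hsum
    (by positivity : (0:ℝ) ≤ (C1 + B1) ^ s * (C2 + B2) ^ t)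
  calc C1 ^ s * C2 ^ t + B1 ^ s * B2 ^ t
      = (C1 ^ s / (C1 + B1) ^ s * (C2 ^ t / (C2 + B2) ^ t) +
        B1 ^ s / (C1 + B1) ^ s * (B2 ^ t / (C2 + B2) ^ t)) * ((C1 + B1) ^ s * (C2 + B2) ^ t) := by
        field_simp
    _ ≤ 1 * ((C1 + B1) ^ s * (C2 + B2) ^ t) := hmul
    _ = (C1 + B1) ^ s * (C2 + B2) ^ t := one_mul _

/-- For `a, b > 0`, the function `f (x, y) = log (a·e^x − b·e^y)`, defined on the open
set where `a·e^x > b·e^y`, is concave. -/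
theorem logDiffExp_concave (a b : ℝ) (ha : 0 < a) (hb : 0 < b) :
    ConcaveOn ℝ {p : ℝ × ℝ | b * Real.exp p.2 < a * Real.exp p.1}
      (fun p : ℝ × ℝ => Real.log (a * Real.exp p.1 - b * Real.exp p.2)) := by
  have hset : {p : ℝ × ℝ | b * Real.exp p.2 < a * Real.exp p.1}
      = {p : ℝ × ℝ | p.2 - p.1 < Real.log a - Real.log b} := by
    ext p
    simp only [Set.mem_setOf_eq]
    rw [← Real.log_lt_log_iff (by positivity) (by positivity),
      Real.log_mul hb.ne' (Real.exp_ne_zero _), Real.log_mul ha.ne' (Real.exp_ne_zero _),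
      Real.log_exp, Real.log_exp]
    constructor <;> intro h <;> linarith
  have hconv : Convex ℝ {p : ℝ × ℝ | b * Real.exp p.2 < a * Real.exp p.1} := by
    rw [hset]
    exact convex_halfSpace_lt
      ⟨fun p q => by simp [Prod.fst_add, Prod.snd_add]; ring,
       fun c p => by simp [smul_eq_mul]; ring⟩ _
  refine ⟨hconv, ?_⟩
  rintro p hp q hq s t hs ht hst
  simp only [Set.mem_setOf_eq] at hp hq
  set C1 : ℝ := a * Real.exp p.1 - b * Real.exp p.2 with hC1def
  set C2 : ℝ := a * Real.exp q.1 - b * Real.exp q.2 with hC2def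
  have hC1 : 0 < C1 := by rw [hC1def]; linarith
  have hC2 : 0 < C2 := by rw [hC2def]; linarith
  have hB1 : 0 < b * Real.exp p.2 := by positivity
  have hB2 : 0 < b * Real.exp q.2 := by positivity
  have key := geom_mean_superadd hs ht hst hC1 hC2 hB1 hB2
  have hx : a * Real.exp (s * p.1 + t * q.1)
      = (C1 + b * Real.exp p.2) ^ s * (C2 + b * Real.exp q.2) ^ t := by
    have e1 : C1 + b * Real.exp p.2 = a * Real.exp p.1 := by rw [hC1def]; ring
    have e2 : C2 + b * Real.exp q.2 = a * Real.exp q.1 := by rw [hC2def]; ring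
    rw [e1, e2, Real.mul_rpow ha.le (Real.exp_nonneg _),
      Real.mul_rpow ha.le (Real.exp_nonneg _), ← Real.exp_mul, ← Real.exp_mul,
      show (a:ℝ) ^ s * Real.exp (p.1 * s) * (a ^ t * Real.exp (q.1 * t))
        = a ^ s * a ^ t * (Real.exp (p.1 * s) * Real.exp (q.1 * t)) by ring,
      ← Real.rpow_add ha, hst, Real.rpow_one, ← Real.exp_add]
    ring_nf
  have hy : b * Real.exp (s * p.2 + t * q.2)
      = (b * Real.exp p.2) ^ s * (b * Real.exp q.2) ^ t := by
    rw [Real.mul_rpow hb.le (Real.exp_nonneg _), Real.mul_rpow hb.le (Real.exp_nonneg _),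
      ← Real.exp_mul, ← Real.exp_mul,
      show (b:ℝ) ^ s * Real.exp (p.2 * s) * (b ^ t * Real.exp (q.2 * t))
        = b ^ s * b ^ t * (Real.exp (p.2 * s) * Real.exp (q.2 * t)) by ring,
      ← Real.rpow_add hb, hst, Real.rpow_one, ← Real.exp_add]
    ring_nf
  have hineq : C1 ^ s * C2 ^ t
      ≤ a * Real.exp (s * p.1 + t * q.1) - b * Real.exp (s * p.2 + t * q.2) := by
    rw [hx, hy]; linarith
  have hpos : 0 < C1 ^ s * C2 ^ t := by positivity
  have hfst : (s • p + t • q).1 = s * p.1 + t * q.1 := rfl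
  have hsnd : (s • p + t • q).2 = s * p.2 + t * q.2 := rfl
  calc s • Real.log C1 + t • Real.log C2
      = Real.log (C1 ^ s * C2 ^ t) := by
        rw [Real.log_mul (by positivity) (by positivity), Real.log_rpow hC1,
          Real.log_rpow hC2]
        simp [smul_eq_mul]
    _ ≤ Real.log (a * Real.exp ((s • p + t • q).1) - b * Real.exp ((s • p + t • q).2)) := by
        rw [hfst, hsnd]
        exact Real.log_le_log hpos hineq
end

section
/- Let f : ℝ → ℝ be continuous and piecewise of the form x ↦ log cosh(x − a_m) + b_m on consecutive intervals [x_m, x_{m+1}] (with x_0 = −∞, x_{N+1} = +∞), and suppose that at every breakpoint the left derivative of f is greater than or equal to the right derivative (Q-concavity). Fix i < j and let g(x) = log cosh(x − a) + b be a single function of this form with g(i) = f(i) and g(j) = f(j). Then f(x) ≥ g(x) for all x ∈ [i, j], and f(x) ≤ g(x) for all x outside [i, j]. -/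
private lemma tanh_sm : StrictMono Real.tanh := by
  intro x y hxy
  rw [Real.tanh_eq_sinh_div_cosh, Real.tanh_eq_sinh_div_cosh,
    div_lt_div_iff₀ (Real.cosh_pos x) (Real.cosh_pos y)]
  have h : 0 < Real.sinh (y - x) := Real.sinh_pos_iff.2 (by linarith)
  rw [Real.sinh_sub] at h
  nlinarith

private lemma cosh_key_le {s t c₁ c₂ : ℝ} (hst : s ≤ t) (hc : c₁ ≤ c₂) :
    Real.cosh (s - c₁) * Real.cosh (t - c₂) ≤ Real.cosh (t - c₁) * Real.cosh (s - c₂) := by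
  rw [Real.cosh_eq, Real.cosh_eq, Real.cosh_eq, Real.cosh_eq]
  rw [neg_sub, neg_sub, neg_sub, neg_sub]
  rw [Real.exp_sub, Real.exp_sub, Real.exp_sub, Real.exp_sub,
    Real.exp_sub, Real.exp_sub, Real.exp_sub, Real.exp_sub]
  have hA := Real.exp_pos s; have hB := Real.exp_pos t
  have hC := Real.exp_pos c₁; have hE := Real.exp_pos c₂
  have hAB : Real.exp s ≤ Real.exp t := Real.exp_le_exp.2 hst
  have hCE : Real.exp c₁ ≤ Real.exp c₂ := Real.exp_le_exp.2 hc
  set A := Real.exp s; set B := Real.exp t; set C := Real.exp c₁; set E := Real.exp c₂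
  rw [div_add_div _ _ (ne_of_gt hC) (ne_of_gt hA), div_add_div _ _ (ne_of_gt hE) (ne_of_gt hB),
    div_add_div _ _ (ne_of_gt hC) (ne_of_gt hB), div_add_div _ _ (ne_of_gt hE) (ne_of_gt hA)]
  rw [div_div, div_div, div_div, div_div, div_mul_div_comm, div_mul_div_comm,
    div_le_div_iff₀ (by positivity) (by positivity)]
  have key : 0 ≤ (B * B - A * A) * (E * E - C * C) * (A * B * C * E) := by
    apply mul_nonneg (mul_nonneg _ _) (by positivity)
    · nlinarith
    · nlinarith
  nlinarith [key]

private lemma cosh_key_lt {s t c₁ c₂ : ℝ} (hst : s < t) (hc : c₁ < c₂) :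
    Real.cosh (s - c₁) * Real.cosh (t - c₂) < Real.cosh (t - c₁) * Real.cosh (s - c₂) := by
  rw [Real.cosh_eq, Real.cosh_eq, Real.cosh_eq, Real.cosh_eq]
  rw [neg_sub, neg_sub, neg_sub, neg_sub]
  rw [Real.exp_sub, Real.exp_sub, Real.exp_sub, Real.exp_sub,
    Real.exp_sub, Real.exp_sub, Real.exp_sub, Real.exp_sub]
  have hA := Real.exp_pos s; have hB := Real.exp_pos t
  have hC := Real.exp_pos c₁; have hE := Real.exp_pos c₂
  have hAB : Real.exp s < Real.exp t := Real.exp_lt_exp.2 hst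
  have hCE : Real.exp c₁ < Real.exp c₂ := Real.exp_lt_exp.2 hc
  set A := Real.exp s; set B := Real.exp t; set C := Real.exp c₁; set E := Real.exp c₂
  rw [div_add_div _ _ (ne_of_gt hC) (ne_of_gt hA), div_add_div _ _ (ne_of_gt hE) (ne_of_gt hB),
    div_add_div _ _ (ne_of_gt hC) (ne_of_gt hB), div_add_div _ _ (ne_of_gt hE) (ne_of_gt hA)]
  rw [div_div, div_div, div_div, div_div, div_mul_div_comm, div_mul_div_comm,
    div_lt_div_iff₀ (by positivity) (by positivity)]
  have key : 0 < (B * B - A * A) * (E * E - C * C) * (A * B * C * E) := by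
    apply mul_pos (mul_pos _ _) (by positivity)
    · nlinarith
    · nlinarith
  nlinarith [key]

private lemma log_key_le {s t c₁ c₂ : ℝ} (hst : s ≤ t) (hc : c₁ ≤ c₂) :
    Real.log (Real.cosh (s - c₁)) + Real.log (Real.cosh (t - c₂)) ≤
    Real.log (Real.cosh (t - c₁)) + Real.log (Real.cosh (s - c₂)) := by
  rw [← Real.log_mul (ne_of_gt (Real.cosh_pos _)) (ne_of_gt (Real.cosh_pos _)),
    ← Real.log_mul (ne_of_gt (Real.cosh_pos _)) (ne_of_gt (Real.cosh_pos _))]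
  exact Real.log_le_log (by positivity) (cosh_key_le hst hc)

private lemma log_key_lt {s t c₁ c₂ : ℝ} (hst : s < t) (hc : c₁ < c₂) :
    Real.log (Real.cosh (s - c₁)) + Real.log (Real.cosh (t - c₂)) <
    Real.log (Real.cosh (t - c₁)) + Real.log (Real.cosh (s - c₂)) := by
  rw [← Real.log_mul (ne_of_gt (Real.cosh_pos _)) (ne_of_gt (Real.cosh_pos _)),
    ← Real.log_mul (ne_of_gt (Real.cosh_pos _)) (ne_of_gt (Real.cosh_pos _))]
  exact Real.log_lt_log (by positivity) (cosh_key_lt hst hc)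

private lemma lowerset_mem_iff {N : ℕ} (S : Finset (Fin N))
    (hlc : ∀ ⦃k k' : Fin N⦄, k' ≤ k → k ∈ S → k' ∈ S) (k : Fin N) :
    k ∈ S ↔ (k : ℕ) < S.card := by
  constructor
  · intro hk
    have hsub : Finset.Iic k ⊆ S := fun k' hk' => hlc (Finset.mem_Iic.1 hk') hk
    have := Finset.card_le_card hsub
    rw [Fin.card_Iic] at this; omega
  · intro hk
    by_contra hmem
    have hsub : S ⊆ Finset.Iio k := by
      intro k' hk'
      rw [Finset.mem_Iio]
      by_contra hge
      exact hmem (hlc (not_lt.1 hge) hk')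
    have := Finset.card_le_card hsub
    rw [Fin.card_Iio] at this; omega

private lemma pd_idx {N : ℕ} {u : Fin N → ℝ} (hu : StrictMono u) (x : ℝ) :
    ∃ R ρ : ℕ, R ≤ N ∧ ρ ≤ R ∧ (∀ k : Fin N, (k : ℕ) < R → u k ≤ x) ∧
      (∀ k : Fin N, ρ ≤ (k : ℕ) → x ≤ u k) := by
  classical
  set S := Finset.univ.filter (fun k : Fin N => u k ≤ x) with hS
  set T := Finset.univ.filter (fun k : Fin N => u k < x) with hT
  have hSlc : ∀ ⦃k k' : Fin N⦄, k' ≤ k → k ∈ S → k' ∈ S := by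
    intro k k' hle hk
    simp only [hS, Finset.mem_filter, Finset.mem_univ, true_and] at *
    exact (hu.monotone hle).trans hk
  have hTlc : ∀ ⦃k k' : Fin N⦄, k' ≤ k → k ∈ T → k' ∈ T := by
    intro k k' hle hk
    simp only [hT, Finset.mem_filter, Finset.mem_univ, true_and] at *
    exact lt_of_le_of_lt (hu.monotone hle) hk
  refine ⟨S.card, T.card, ?_, ?_, ?_, ?_⟩
  · exact (Finset.card_filter_le _ _).trans (by simp)
  · apply Finset.card_le_card
    intro k hk
    simp only [hS, hT, Finset.mem_filter, Finset.mem_univ, true_and] at *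
    exact hk.le
  · intro k hk
    have := (lowerset_mem_iff S hSlc k).2 hk
    simpa [hS] using this
  · intro k hk
    by_contra hgt; push_neg at hgt
    have hmem : k ∈ T := by simp [hT, hgt]
    have := (lowerset_mem_iff T hTlc k).1 hmem
    omega

private lemma pd_onePiece {N : ℕ} {u : Fin N → ℝ} {c d : Fin (N + 1) → ℝ} {f : ℝ → ℝ}
    (hpiece : ∀ (m : Fin (N + 1)) (x : ℝ),
      (∀ k : Fin N, ((k : ℕ) < (m : ℕ) → u k ≤ x) ∧ ((m : ℕ) ≤ (k : ℕ) → x ≤ u k)) →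
      f x = Real.log (Real.cosh (x - c m)) + d m)
    (a b : ℝ) (r : ℕ) (hr : r < N + 1) (s t : ℝ) (hst : s ≤ t)
    (hks : ∀ k : Fin N, (k : ℕ) < r → u k ≤ s) (hkt : ∀ k : Fin N, r ≤ (k : ℕ) → t ≤ u k) :
    (a ≤ c ⟨r, hr⟩ →
      f t - (Real.log (Real.cosh (t - a)) + b) ≤ f s - (Real.log (Real.cosh (s - a)) + b)) ∧
    (c ⟨r, hr⟩ ≤ a →
      f s - (Real.log (Real.cosh (s - a)) + b) ≤ f t - (Real.log (Real.cosh (t - a)) + b)) ∧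
    (s < t → a < c ⟨r, hr⟩ →
      f t - (Real.log (Real.cosh (t - a)) + b) < f s - (Real.log (Real.cosh (s - a)) + b)) ∧
    (s < t → c ⟨r, hr⟩ < a →
      f s - (Real.log (Real.cosh (s - a)) + b) < f t - (Real.log (Real.cosh (t - a)) + b)) := by
  have fs : f s = Real.log (Real.cosh (s - c ⟨r, hr⟩)) + d ⟨r, hr⟩ :=
    hpiece ⟨r, hr⟩ s (fun k => ⟨fun hk => hks k hk, fun hk => hst.trans (hkt k hk)⟩)
  have ft : f t = Real.log (Real.cosh (t - c ⟨r, hr⟩)) + d ⟨r, hr⟩ :=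
    hpiece ⟨r, hr⟩ t (fun k => ⟨fun hk => (hks k hk).trans hst, fun hk => hkt k hk⟩)
  refine ⟨fun ha => ?_, fun ha => ?_, fun h1 ha => ?_, fun h1 ha => ?_⟩
  · have := log_key_le (c₁ := a) (c₂ := c ⟨r, hr⟩) hst ha
    rw [fs, ft]; linarith
  · have := log_key_le (c₁ := c ⟨r, hr⟩) (c₂ := a) hst ha
    rw [fs, ft]; linarith
  · have := log_key_lt (c₁ := a) (c₂ := c ⟨r, hr⟩) h1 ha
    rw [fs, ft]; linarith
  · have := log_key_lt (c₁ := c ⟨r, hr⟩) (c₂ := a) h1 ha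
    rw [fs, ft]; linarith

private lemma pd_dec {N : ℕ} {u : Fin N → ℝ} {c d : Fin (N + 1) → ℝ} {f : ℝ → ℝ}
    (hu : StrictMono u) (hc : Monotone c)
    (hpiece : ∀ (m : Fin (N + 1)) (x : ℝ),
      (∀ k : Fin N, ((k : ℕ) < (m : ℕ) → u k ≤ x) ∧ ((m : ℕ) ≤ (k : ℕ) → x ≤ u k)) →
      f x = Real.log (Real.cosh (x - c m)) + d m)
    (a b : ℝ) :
    ∀ (n r : ℕ) (hr : r ≤ N), N - r ≤ n → ∀ s t : ℝ, s ≤ t →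
      (∀ k : Fin N, (k : ℕ) < r → u k ≤ s) →
      (a ≤ c ⟨r, Nat.lt_succ_of_le hr⟩ →
        f t - (Real.log (Real.cosh (t - a)) + b) ≤ f s - (Real.log (Real.cosh (s - a)) + b)) ∧
      (s < t → a < c ⟨r, Nat.lt_succ_of_le hr⟩ →
        f t - (Real.log (Real.cosh (t - a)) + b) < f s - (Real.log (Real.cosh (s - a)) + b)) := by
  intro n
  induction n with
  | zero =>
    intro r hr hn s t hst hks
    have hkt : ∀ k : Fin N, r ≤ (k : ℕ) → t ≤ u k := fun k hk => absurd k.isLt (by omega)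
    have H := pd_onePiece hpiece a b r (Nat.lt_succ_of_le hr) s t hst hks hkt
    exact ⟨H.1, H.2.2.1⟩
  | succ n ih =>
    intro r hr hn s t hst hks
    by_cases h1 : ∀ k : Fin N, r ≤ (k : ℕ) → t ≤ u k
    · have H := pd_onePiece hpiece a b r (Nat.lt_succ_of_le hr) s t hst hks h1
      exact ⟨H.1, H.2.2.1⟩
    · push_neg at h1
      obtain ⟨k, hk1, hk2⟩ := h1
      have hrN : r < N := lt_of_le_of_lt hk1 k.isLt
      have hwt : u ⟨r, hrN⟩ < t := lt_of_le_of_lt (hu.monotone (Fin.le_def.2 hk1)) hk2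
      have hks' : ∀ k' : Fin N, (k' : ℕ) < r + 1 → u k' ≤ max s (u ⟨r, hrN⟩) := by
        intro k' hk'
        rcases Nat.lt_or_ge (k' : ℕ) r with h | h
        · exact (hks k' h).trans (le_max_left _ _)
        · rw [show k' = ⟨r, hrN⟩ from Fin.ext (show (k' : ℕ) = r by omega)]
          exact le_max_right _ _
      have hcstep : c ⟨r, Nat.lt_succ_of_le hr⟩ ≤ c ⟨r + 1, Nat.lt_succ_of_le hrN⟩ :=
        hc (Fin.le_def.2 (Nat.le_succ r))
      have step : a ≤ c ⟨r, Nat.lt_succ_of_le hr⟩ →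
          f (max s (u ⟨r, hrN⟩)) - (Real.log (Real.cosh (max s (u ⟨r, hrN⟩) - a)) + b) ≤
            f s - (Real.log (Real.cosh (s - a)) + b) := by
        intro ha
        rcases le_or_gt (u ⟨r, hrN⟩) s with h | h
        · rw [max_eq_left h]
        · rw [max_eq_right h.le]
          exact (pd_onePiece hpiece a b r (Nat.lt_succ_of_le hr) s (u ⟨r, hrN⟩) h.le hks
            (fun k' hk' => hu.monotone (Fin.le_def.2 hk'))).1 ha
      have main := ih (r + 1) hrN (by omega) (max s (u ⟨r, hrN⟩)) t
        (max_le hst hwt.le) hks'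
      constructor
      · intro ha
        exact (main.1 (ha.trans hcstep)).trans (step ha)
      · intro hst' ha
        exact lt_of_lt_of_le (main.2 (max_lt hst' hwt) (ha.trans_le hcstep)) (step ha.le)

private lemma pd_inc {N : ℕ} {u : Fin N → ℝ} {c d : Fin (N + 1) → ℝ} {f : ℝ → ℝ}
    (hu : StrictMono u) (hc : Monotone c)
    (hpiece : ∀ (m : Fin (N + 1)) (x : ℝ),
      (∀ k : Fin N, ((k : ℕ) < (m : ℕ) → u k ≤ x) ∧ ((m : ℕ) ≤ (k : ℕ) → x ≤ u k)) →
      f x = Real.log (Real.cosh (x - c m)) + d m)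
    (a b : ℝ) :
    ∀ (r : ℕ) (hr : r ≤ N), ∀ s t : ℝ, s ≤ t →
      (∀ k : Fin N, r ≤ (k : ℕ) → t ≤ u k) →
      (c ⟨r, Nat.lt_succ_of_le hr⟩ ≤ a →
        f s - (Real.log (Real.cosh (s - a)) + b) ≤ f t - (Real.log (Real.cosh (t - a)) + b)) ∧
      (s < t → c ⟨r, Nat.lt_succ_of_le hr⟩ < a →
        f s - (Real.log (Real.cosh (s - a)) + b) < f t - (Real.log (Real.cosh (t - a)) + b)) := by
  intro r
  induction r with
  | zero =>
    intro hr s t hst hkt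
    have hks : ∀ k : Fin N, (k : ℕ) < 0 → u k ≤ s := fun k hk => absurd hk (Nat.not_lt_zero _)
    have H := pd_onePiece hpiece a b 0 (Nat.lt_succ_of_le hr) s t hst hks hkt
    exact ⟨H.2.1, H.2.2.2⟩
  | succ r ih =>
    intro hr s t hst hkt
    by_cases h1 : ∀ k : Fin N, (k : ℕ) < r + 1 → u k ≤ s
    · have H := pd_onePiece hpiece a b (r + 1) (Nat.lt_succ_of_le hr) s t hst h1 hkt
      exact ⟨H.2.1, H.2.2.2⟩
    · push_neg at h1
      obtain ⟨k, hk1, hk2⟩ := h1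
      have hrN : r < N := by omega
      have hsw : s < u ⟨r, hrN⟩ :=
        lt_of_lt_of_le hk2 (hu.monotone (Fin.le_def.2 (by omega : (k : ℕ) ≤ r)))
      have hcstep : c ⟨r, Nat.lt_succ_of_le hrN.le⟩ ≤ c ⟨r + 1, Nat.lt_succ_of_le hr⟩ :=
        hc (Fin.le_def.2 (Nat.le_succ r))
      have step : c ⟨r + 1, Nat.lt_succ_of_le hr⟩ ≤ a →
          f (min t (u ⟨r, hrN⟩)) - (Real.log (Real.cosh (min t (u ⟨r, hrN⟩) - a)) + b) ≤
            f t - (Real.log (Real.cosh (t - a)) + b) := by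
        intro ha
        rcases le_or_gt t (u ⟨r, hrN⟩) with h | h
        · rw [min_eq_left h]
        · rw [min_eq_right h.le]
          exact (pd_onePiece hpiece a b (r + 1) (Nat.lt_succ_of_le hr) (u ⟨r, hrN⟩) t h.le
            (fun k' hk' => hu.monotone (Fin.le_def.2 (show (k' : ℕ) ≤ r by omega))) hkt).2.1 ha
      have hkt' : ∀ k' : Fin N, r ≤ (k' : ℕ) → min t (u ⟨r, hrN⟩) ≤ u k' := by
        intro k' hk'
        rcases eq_or_lt_of_le hk' with h | h
        · rw [show k' = ⟨r, hrN⟩ from Fin.ext h.symm]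
          exact min_le_right _ _
        · exact (min_le_left _ _).trans (hkt k' (by omega))
      have main := ih hrN.le s (min t (u ⟨r, hrN⟩)) (le_min hst hsw.le) hkt'
      constructor
      · intro ha
        exact (main.1 (hcstep.trans ha)).trans (step ha)
      · intro hst' ha
        exact lt_of_lt_of_le (main.2 (lt_min hst' hsw) (hcstep.trans_lt ha)) (step ha.le)

/-- Comparison lemma for Q-concave piecewise distance-like functions on `ℝ`.
`f` is continuous, equal to `x ↦ log cosh (x − c m) + d m` on the `m`-th interval of the
subdivision of `ℝ` by the breakpoints `u 0 < ⋯ < u (N−1)`, and Q-concave (at every breakpoint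
the left derivative is ≥ the right derivative).  If `g x = log cosh (x − a) + b` is a single
distance-like function agreeing with `f` at `i < j`, then `f ≥ g` on `[i, j]` and `f ≤ g`
outside of `[i, j]`. -/
theorem pd_comparison (N : ℕ) (u : Fin N → ℝ) (hu : StrictMono u)
    (c d : Fin (N + 1) → ℝ) (f : ℝ → ℝ) (hf : Continuous f)
    (hpiece : ∀ (m : Fin (N + 1)) (x : ℝ),
      (∀ k : Fin N, ((k : ℕ) < (m : ℕ) → u k ≤ x) ∧ ((m : ℕ) ≤ (k : ℕ) → x ≤ u k)) →
      f x = Real.log (Real.cosh (x - c m)) + d m)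
    (hQ : ∀ k : Fin N, Real.tanh (u k - c k.succ) ≤ Real.tanh (u k - c k.castSucc))
    (i j : ℝ) (hij : i < j) (a b : ℝ)
    (hgi : Real.log (Real.cosh (i - a)) + b = f i)
    (hgj : Real.log (Real.cosh (j - a)) + b = f j) :
    (∀ x ∈ Set.Icc i j, Real.log (Real.cosh (x - a)) + b ≤ f x) ∧
    (∀ x : ℝ, x ∉ Set.Icc i j → f x ≤ Real.log (Real.cosh (x - a)) + b) := by
  have hc : Monotone c := Fin.monotone_iff_le_succ.2 (fun k => by
    have := tanh_sm.le_iff_le.1 (hQ k); linarith)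
  have hφi : f i - (Real.log (Real.cosh (i - a)) + b) = 0 := by rw [← hgi]; ring
  have hφj : f j - (Real.log (Real.cosh (j - a)) + b) = 0 := by rw [← hgj]; ring
  constructor
  · intro x hx
    by_contra hlt; push_neg at hlt
    obtain ⟨hxi, hxj⟩ := hx
    have hφx : f x - (Real.log (Real.cosh (x - a)) + b) < 0 := by linarith
    have hxi' : i < x := by
      rcases eq_or_lt_of_le hxi with h | h
      · exfalso; rw [← h] at hφx; linarith
      · exact h
    have hxj' : x < j := by
      rcases eq_or_lt_of_le hxj with h | h
      · exfalso; rw [h] at hφx; linarith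
      · exact h
    obtain ⟨R, ρ, hRN, hρR, hks, hkt⟩ := pd_idx hu x
    have hρN : ρ ≤ N := hρR.trans hRN
    have h2 : a ≤ c ⟨ρ, Nat.lt_succ_of_le hρN⟩ := by
      by_contra hna; push_neg at hna
      have := (pd_inc hu hc hpiece a b ρ hρN i x hxi'.le hkt).2 hxi' hna
      linarith
    have h3 : a ≤ c ⟨R, Nat.lt_succ_of_le hRN⟩ := h2.trans (hc (Fin.le_def.2 hρR))
    have := (pd_dec hu hc hpiece a b N R hRN (by omega) x j hxj'.le hks).1 h3
    linarith
  · intro x hx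
    by_contra hlt; push_neg at hlt
    rw [Set.mem_Icc, not_and_or, not_le, not_le] at hx
    rcases hx with hxi | hxj
    · obtain ⟨R, ρ, hRN, hρR, hks, hkt⟩ := pd_idx hu i
      have hρN : ρ ≤ N := hρR.trans hRN
      have h2 : a < c ⟨ρ, Nat.lt_succ_of_le hρN⟩ := by
        by_contra hna; push_neg at hna
        have := (pd_inc hu hc hpiece a b ρ hρN x i hxi.le hkt).1 hna
        linarith
      have h3 : a < c ⟨R, Nat.lt_succ_of_le hRN⟩ := h2.trans_le (hc (Fin.le_def.2 hρR))
      have := (pd_dec hu hc hpiece a b N R hRN (by omega) i j hij.le hks).2 hij h3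
      linarith
    · obtain ⟨R, ρ, hRN, hρR, hks, hkt⟩ := pd_idx hu j
      have hρN : ρ ≤ N := hρR.trans hRN
      have h2 : c ⟨R, Nat.lt_succ_of_le hRN⟩ < a := by
        by_contra hna; push_neg at hna
        have := (pd_dec hu hc hpiece a b N R hRN (by omega) j x hxj.le hks).1 hna
        linarith
      have h3 : c ⟨ρ, Nat.lt_succ_of_le hρN⟩ < a := (hc (Fin.le_def.2 hρR)).trans_lt h2
      have := (pd_inc hu hc hpiece a b ρ hρN i j hij.le hkt).2 hij h3
      linarith
end

section
/- In the hyperbolic plane ℍ², let B be a horodisk and i, j two points not in B, with h_i = dist(i, B), h_j = dist(j, B), λ = dist(i, j), and let ρ_i be the angle at i between the geodesic segment ij and the perpendicular from i to B. Then cos ρ_i = (cosh λ − e^{h_j − h_i}) / sinh λ. -/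
set_option maxHeartbeats 1600000 in
open UpperHalfPlane Real in
/-- Cosine law for semi-ideal triangles, in the upper half-plane model.  The horodisk `B` is
`{im ≥ t}`, so the distance from a point `p ∉ B` to `B` is `log (t / im p)` and the
perpendicular from `p` to `B` is the upward vertical.  The points `i, j` lie on the geodesic
semicircle of radius `R` centered at `c ∈ ℝ`, at angles `α, β ∈ (0, π)`; the cosine of the
angle `ρ_i` at `i` between the segment `ij` and the upward vertical equals `cos α` when
`α < β` and `−cos α` otherwise.  Then
`cos ρ_i = (cosh λ − e^{h_j − h_i}) / sinh λ` where `λ = dist i j`. -/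
theorem cosine_law_semiIdeal (c R t α β : ℝ) (hR : 0 < R)
    (hα : α ∈ Set.Ioo 0 π) (hβ : β ∈ Set.Ioo 0 π) (hαβ : α ≠ β)
    (z w : ℍ)
    (hz : (z : ℂ) = c + R * Complex.exp (α * Complex.I))
    (hw : (w : ℂ) = c + R * Complex.exp (β * Complex.I))
    (hzB : z.im < t) (hwB : w.im < t) :
    (if α < β then Real.cos α else -Real.cos α) =
      (Real.cosh (dist z w) -
          Real.exp (Real.log (t / w.im) - Real.log (t / z.im))) /
        Real.sinh (dist z w) := by
  obtain ⟨hα0, hαπ⟩ := hα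
  obtain ⟨hβ0, hβπ⟩ := hβ
  have hsα : 0 < Real.sin α := Real.sin_pos_of_pos_of_lt_pi hα0 hαπ
  have hsβ : 0 < Real.sin β := Real.sin_pos_of_pos_of_lt_pi hβ0 hβπ
  have hz_im : z.im = R * Real.sin α := by
    have : ((z : ℂ)).im = R * Real.sin α := by
      rw [hz, Complex.exp_mul_I]; simp [Complex.sin_ofReal_re]
    simpa using this
  have hw_im : w.im = R * Real.sin β := by
    have : ((w : ℂ)).im = R * Real.sin β := by
      rw [hw, Complex.exp_mul_I]; simp [Complex.sin_ofReal_re]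
    simpa using this
  have hzim_pos : 0 < z.im := by rw [hz_im]; positivity
  have hwim_pos : 0 < w.im := by rw [hw_im]; positivity
  have ht : 0 < t := lt_trans hzim_pos hzB
  -- simplify the exponential term
  have hexp : Real.exp (Real.log (t / w.im) - Real.log (t / z.im)) = z.im / w.im := by
    rw [Real.exp_sub, Real.exp_log (by positivity), Real.exp_log (by positivity)]
    field_simp
  -- distance squared in ℂ
  have hdsq : dist (z : ℂ) (w : ℂ) ^ 2 = 2 * R ^ 2 * (1 - Real.cos (α - β)) := by
    rw [Complex.dist_eq, Complex.sq_norm, Complex.normSq_apply, hz, hw,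
      Complex.exp_mul_I, Complex.exp_mul_I]
    simp [Real.cos_sub, Complex.cos_ofReal_re, Complex.sin_ofReal_re]
    nlinarith [Real.sin_sq_add_cos_sq α, Real.sin_sq_add_cos_sq β]
  have hcosh : Real.cosh (dist z w) = 1 + (1 - Real.cos (α - β)) / (Real.sin α * Real.sin β) := by
    rw [UpperHalfPlane.cosh_dist, hdsq, hz_im, hw_im]
    field_simp
  set s := Real.sin ((α + β) / 2) with hs_def
  set d := Real.sin ((α - β) / 2) with hd_def
  have hs_pos : 0 < s := by
    apply Real.sin_pos_of_pos_of_lt_pi <;> nlinarith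
  have hc : 1 - Real.cos (α - β) = 2 * d ^ 2 := by
    have h := Real.sin_sq_eq_half_sub ((α - β) / 2)
    rw [show 2 * ((α - β) / 2) = α - β by ring] at h
    rw [hd_def]; linarith
  have hc2 : 1 - Real.cos (α + β) = 2 * s ^ 2 := by
    have h := Real.sin_sq_eq_half_sub ((α + β) / 2)
    rw [show 2 * ((α + β) / 2) = α + β by ring] at h
    rw [hs_def]; linarith
  have hsd : s ^ 2 - d ^ 2 = Real.sin α * Real.sin β := by
    have h1 := Real.cos_sub α β
    have h2 := Real.cos_add α β
    linarith
  have hP : 0 < Real.sin α * Real.sin β := mul_pos hsα hsβ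
  have hcosh' : Real.cosh (dist z w) * (Real.sin α * Real.sin β)
      = Real.sin α * Real.sin β + 2 * d ^ 2 := by
    rw [hcosh, hc]; field_simp
  have hsinh : Real.sinh (dist z w) = 2 * |d| * s / (Real.sin α * Real.sin β) := by
    have h1 : Real.sinh (dist z w) ^ 2 = Real.cosh (dist z w) ^ 2 - 1 := by
      have := Real.cosh_sq_sub_sinh_sq (dist z w); linarith
    have hsq : (Real.sinh (dist z w) * (Real.sin α * Real.sin β)) ^ 2
        = (2 * |d| * s) ^ 2 := by
      have habs : |d| ^ 2 = d ^ 2 := sq_abs d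
      linear_combination (Real.sin α * Real.sin β) ^ 2 * h1 +
        (Real.cosh (dist z w) * (Real.sin α * Real.sin β) +
          Real.sin α * Real.sin β + 2 * d ^ 2) * hcosh' -
        4 * s ^ 2 * habs - 4 * d ^ 2 * hsd
    have h0 : 0 ≤ Real.sinh (dist z w) * (Real.sin α * Real.sin β) := by
      have := Real.sinh_nonneg_iff.mpr (dist_nonneg (x := z) (y := w)); positivity
    have h0' : 0 ≤ 2 * |d| * s := by positivity
    have := (sq_eq_sq₀ h0 h0').mp hsq
    rw [eq_div_iff hP.ne']
    exact this
  have hsinh_pos : 0 < Real.sinh (dist z w) := by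
    have hd0 : d ≠ 0 := by
      rw [hd_def]
      intro h
      have h2 : (α - β) / 2 = 0 :=
        (Real.sin_eq_zero_iff_of_lt_of_lt (by linarith : -π < (α - β) / 2)
          (by linarith : (α - β) / 2 < π)).mp h
      apply hαβ; linarith
    rw [hsinh]
    have : 0 < |d| := abs_pos.mpr hd0
    positivity
  rw [hexp, eq_div_iff (ne_of_gt hsinh_pos), hsinh, hcosh, hz_im, hw_im]
  have hccc : Real.cos α - Real.cos β = -2 * s * d := by
    have := Real.cos_sub_cos α β
    rw [hs_def, hd_def]; linarith
  have hcos_ab : Real.cos (α - β) = Real.cos α * Real.cos β + Real.sin α * Real.sin β :=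
    Real.cos_sub α β
  have hpyth : Real.sin α ^ 2 + Real.cos α ^ 2 = 1 := Real.sin_sq_add_cos_sq α
  split_ifs with hlt
  · have habs : |d| = -d := by
      apply abs_of_nonpos
      rw [hd_def]
      apply Real.sin_nonpos_of_nonpos_of_neg_pi_le <;> nlinarith
    rw [habs]
    field_simp
    linear_combination hcos_ab + hpyth - Real.cos α * hccc
  · have hgt : β < α := lt_of_le_of_ne (not_lt.mp hlt) (Ne.symm hαβ)
    have habs : |d| = d := by
      apply abs_of_nonneg
      rw [hd_def]
      apply Real.sin_nonneg_of_nonneg_of_le_pi <;> nlinarith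
    rw [habs]
    field_simp
    linear_combination hcos_ab + hpyth - Real.cos α * hccc
end

section
/- In the hyperbolic plane, let i, j, k be three collinear points with j between i and k, let λ = dist(i, j) and μ = dist(j, k), and let B be a horodisk containing none of them, with h_p = dist(p, B) for p ∈ {i, j, k}. Then e^{h_j} = (sinh μ / sinh(λ + μ)) e^{h_i} + (sinh λ / sinh(λ + μ)) e^{h_k}. -/
open Real UpperHalfPlane
set_option maxHeartbeats 1000000

lemma im_on_circle (c R θ : ℝ) (z : UpperHalfPlane)
    (hz : (z : ℂ) = c + R * Complex.exp (θ * Complex.I)) :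
    z.im = R * Real.sin θ := by
  have h0 : z.im = ((z : ℂ)).im := rfl
  rw [h0, hz]
  simp [Complex.add_im, Complex.mul_im, Complex.exp_ofReal_mul_I_im,
    Complex.exp_ofReal_mul_I_re]

lemma sin_half_angle (θ : ℝ) (h : θ ∈ Set.Ioo 0 π) :
    Real.sin θ = 2 * Real.tan (θ/2) / (1 + Real.tan (θ/2)^2) := by
  have hc : 0 < Real.cos (θ/2) := by
    apply Real.cos_pos_of_mem_Ioo
    constructor <;> [linarith [h.1, Real.pi_pos]; linarith [h.2]]
  have hs : Real.sin θ = 2 * Real.sin (θ/2) * Real.cos (θ/2) := by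
    have h2 := Real.sin_two_mul (θ/2); rw [show 2*(θ/2)=θ by ring] at h2; exact h2
  rw [hs, Real.tan_eq_sin_div_cos]
  have hpy := Real.sin_sq_add_cos_sq (θ/2)
  field_simp
  have h3 : Real.sin (θ/2) * (Real.sin (θ/2)^2 + Real.cos (θ/2)^2) = Real.sin (θ/2) * 1 := by rw [hpy]
  linarith [h3]

lemma tan_half_pos (θ : ℝ) (h : θ ∈ Set.Ioo 0 π) : 0 < Real.tan (θ/2) := by
  apply Real.tan_pos_of_pos_of_lt_pi_div_two
  · linarith [h.1]
  · linarith [h.2]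

lemma dist_on_circle (c R : ℝ) (hR : 0 < R) (θ₁ θ₂ : ℝ)
    (h1 : θ₁ ∈ Set.Ioo 0 π) (h2 : θ₂ ∈ Set.Ioo 0 π) (h12 : θ₁ < θ₂)
    (z w : UpperHalfPlane)
    (hz : (z : ℂ) = c + R * Complex.exp (θ₁ * Complex.I))
    (hw : (w : ℂ) = c + R * Complex.exp (θ₂ * Complex.I)) :
    dist z w = Real.log (Real.tan (θ₂/2) / Real.tan (θ₁/2)) := by
  have ha : 0 < Real.tan (θ₁/2) := tan_half_pos _ h1
  have hb : 0 < Real.tan (θ₂/2) := tan_half_pos _ h2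
  set a := Real.tan (θ₁/2) with hadef
  set b := Real.tan (θ₂/2) with hbdef
  -- half angles sin/cos positivity
  have hs1 : 0 < Real.sin (θ₁/2) := Real.sin_pos_of_pos_of_lt_pi (by linarith [h1.1]) (by nlinarith [h1.2, Real.pi_pos])
  have hc1 : 0 < Real.cos (θ₁/2) := Real.cos_pos_of_mem_Ioo ⟨by linarith [h1.1, Real.pi_pos], by linarith [h1.2]⟩
  have hs2 : 0 < Real.sin (θ₂/2) := Real.sin_pos_of_pos_of_lt_pi (by linarith [h2.1]) (by nlinarith [h2.2, Real.pi_pos])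
  have hc2 : 0 < Real.cos (θ₂/2) := Real.cos_pos_of_mem_Ioo ⟨by linarith [h2.1, Real.pi_pos], by linarith [h2.2]⟩
  have hsin1 : Real.sin θ₁ = 2 * Real.sin (θ₁/2) * Real.cos (θ₁/2) := by
    have h2' := Real.sin_two_mul (θ₁/2); rw [show 2*(θ₁/2)=θ₁ by ring] at h2'; exact h2'
  have hsin2 : Real.sin θ₂ = 2 * Real.sin (θ₂/2) * Real.cos (θ₂/2) := by
    have h2' := Real.sin_two_mul (θ₂/2); rw [show 2*(θ₂/2)=θ₂ by ring] at h2'; exact h2'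
  -- complex distance
  have hΔ : 0 < Real.sin ((θ₂ - θ₁)/2) := by
    apply Real.sin_pos_of_pos_of_lt_pi
    · linarith
    · nlinarith [h1.1, h2.2, Real.pi_pos]
  have hD : dist (z : ℂ) (w : ℂ) = 2 * R * Real.sin ((θ₂ - θ₁)/2) := by
    rw [Complex.dist_eq, hz, hw]
    have hsub : (↑c + ↑R * Complex.exp (↑θ₁ * Complex.I) - (↑c + ↑R * Complex.exp (↑θ₂ * Complex.I)))
        = (R : ℂ) * (Complex.exp (↑θ₁ * Complex.I) - Complex.exp (↑θ₂ * Complex.I)) := by ring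
    rw [hsub, norm_mul, Complex.norm_real, Real.norm_eq_abs, abs_of_pos hR]
    have hre : (Complex.exp (↑θ₁ * Complex.I) - Complex.exp (↑θ₂ * Complex.I)).re
        = Real.cos θ₁ - Real.cos θ₂ := by
      simp [Complex.sub_re, Complex.exp_ofReal_mul_I_re]
    have him : (Complex.exp (↑θ₁ * Complex.I) - Complex.exp (↑θ₂ * Complex.I)).im
        = Real.sin θ₁ - Real.sin θ₂ := by
      simp [Complex.sub_im, Complex.exp_ofReal_mul_I_im]
    rw [Complex.norm_def, Complex.normSq_apply, hre, him]
    have hid : (Real.cos θ₁ - Real.cos θ₂) * (Real.cos θ₁ - Real.cos θ₂)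
        + (Real.sin θ₁ - Real.sin θ₂) * (Real.sin θ₁ - Real.sin θ₂)
        = (2 * Real.sin ((θ₂ - θ₁)/2))^2 := by
      have hcos : Real.cos (θ₂ - θ₁) = Real.cos θ₂ * Real.cos θ₁ + Real.sin θ₂ * Real.sin θ₁ :=
        Real.cos_sub θ₂ θ₁
      have hsq : Real.sin ((θ₂ - θ₁)/2)^2 = 1/2 - Real.cos (θ₂ - θ₁)/2 := by
        have h3 := Real.sin_sq_eq_half_sub ((θ₂ - θ₁)/2)
        rw [show 2*((θ₂ - θ₁)/2) = θ₂ - θ₁ by ring] at h3; exact h3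
      have hp1 := Real.sin_sq_add_cos_sq θ₁
      have hp2 := Real.sin_sq_add_cos_sq θ₂
      nlinarith [hcos, hsq, hp1, hp2]
    rw [hid, Real.sqrt_sq (by positivity)]
    ring
  have hzim : z.im = R * Real.sin θ₁ := im_on_circle c R θ₁ z hz
  have hwim : w.im = R * Real.sin θ₂ := im_on_circle c R θ₂ w hw
  rw [UpperHalfPlane.dist_eq, hD, hzim, hwim]
  rw [show Real.log (b/a) = 2 * Real.arsinh (Real.sinh (Real.log (b/a) / 2)) by
    rw [Real.arsinh_sinh]; ring]
  congr 1
  have hba : (0:ℝ) ≤ b / a := by positivity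
  rw [show Real.log (b/a)/2 = Real.log (Real.sqrt (b/a)) from (Real.log_sqrt hba).symm]
  have hx : 0 < Real.sqrt (b/a) := Real.sqrt_pos.mpr (by positivity)
  rw [Real.sinh_log hx]
  congr 1
  have hx1 : 1 ≤ Real.sqrt (b/a) := by
    rw [show (1:ℝ) = Real.sqrt 1 from (Real.sqrt_one).symm]
    apply Real.sqrt_le_sqrt
    rw [le_div_iff₀ ha]
    have : a < b := by
      rw [hadef, hbdef]
      exact Real.tan_lt_tan_of_nonneg_of_lt_pi_div_two (by linarith [h1.1]) (by linarith [h2.2]) (by linarith)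
    linarith
  have hLnn : 0 ≤ 2 * R * Real.sin ((θ₂ - θ₁)/2) / (2 * Real.sqrt (R * Real.sin θ₁ * (R * Real.sin θ₂))) := by
    positivity
  have hRnn : 0 ≤ (Real.sqrt (b/a) - (Real.sqrt (b/a))⁻¹) / 2 := by
    have : (Real.sqrt (b/a))⁻¹ ≤ 1 := by
      exact inv_le_one_of_one_le₀ hx1
    linarith
  have hsqprod : 0 < R * Real.sin θ₁ * (R * Real.sin θ₂) := by
    have := Real.sin_pos_of_pos_of_lt_pi h1.1 h1.2
    have := Real.sin_pos_of_pos_of_lt_pi h2.1 h2.2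
    positivity
  have e1 : (Real.sqrt (R * Real.sin θ₁ * (R * Real.sin θ₂)))^2 = R * Real.sin θ₁ * (R * Real.sin θ₂) :=
    Real.sq_sqrt hsqprod.le
  have e2 : (Real.sqrt (b/a))^2 = b/a := Real.sq_sqrt hba
  have hΔeq : Real.sin ((θ₂ - θ₁)/2)
      = Real.sin (θ₂/2) * Real.cos (θ₁/2) - Real.cos (θ₂/2) * Real.sin (θ₁/2) := by
    rw [show (θ₂ - θ₁)/2 = θ₂/2 - θ₁/2 by ring, Real.sin_sub]
  have hxne : Real.sqrt (b/a) ≠ 0 := ne_of_gt hx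
  have hsqrtne : Real.sqrt (R * Real.sin θ₁ * (R * Real.sin θ₂)) ≠ 0 := by positivity
  set x := Real.sqrt (b/a) with hxdef
  set P := R * Real.sin θ₁ * (R * Real.sin θ₂) with hPdef
  have key : (2 * R * Real.sin ((θ₂ - θ₁)/2) / (2 * Real.sqrt P))^2
      = (2 * R * Real.sin ((θ₂ - θ₁)/2))^2 / (4 * P) := by
    rw [div_pow, show (2*Real.sqrt P)^2 = 4*P by rw [mul_pow, Real.sq_sqrt hsqprod.le]; ring]
  have key2 : ((x - x⁻¹)/2)^2 = (b/a - 2 + a/b)/4 := by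
    have c1' : ((x - x⁻¹)/2)^2 = (x^2 - 2*(x*x⁻¹) + (x^2)⁻¹)/4 := by
      rw [← inv_pow]; ring
    rw [c1', mul_inv_cancel₀ hxne, e2, inv_div]; ring
  have hsq_eq : (2 * R * Real.sin ((θ₂ - θ₁)/2) / (2 * Real.sqrt P))^2
      = ((x - x⁻¹)/2)^2 := by
    rw [key, key2, hΔeq, hPdef, hsin1, hsin2, hadef, hbdef, Real.tan_eq_sin_div_cos,
      Real.tan_eq_sin_div_cos]
    field_simp
    ring
  calc 2 * R * Real.sin ((θ₂ - θ₁)/2) / (2 * Real.sqrt P)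
      = Real.sqrt ((2 * R * Real.sin ((θ₂ - θ₁)/2) / (2 * Real.sqrt P))^2) :=
        (Real.sqrt_sq hLnn).symm
    _ = Real.sqrt (((x - x⁻¹)/2)^2) := by rw [hsq_eq]
    _ = (x - x⁻¹)/2 := Real.sqrt_sq hRnn


open UpperHalfPlane Real in
/-- Sinh-interpolation formula (Lemma 2.8), in the upper half-plane model.  The horodisk is
`{im ≥ t}`, so the distance from a point `p` below it to the horodisk is `log (t / im p)`.
Three collinear points `i, j, k` (with `j` between `i` and `k`) lie on the geodesic
semicircle of radius `R` centered at `c ∈ ℝ` at angles `α < β < γ` in `(0, π)`.  With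
`λ = dist i j`, `μ = dist j k` and `h_p = dist (p, B)`:
`e^{h_j} = (sinh μ / sinh (λ+μ)) e^{h_i} + (sinh λ / sinh (λ+μ)) e^{h_k}`. -/
theorem sinh_interpolation (c R t α β γ : ℝ) (hR : 0 < R)
    (hα : α ∈ Set.Ioo 0 π) (hγ : γ ∈ Set.Ioo 0 π) (hαβ : α < β) (hβγ : β < γ)
    (zi zj zk : ℍ)
    (hi : (zi : ℂ) = c + R * Complex.exp (α * Complex.I))
    (hj : (zj : ℂ) = c + R * Complex.exp (β * Complex.I))
    (hk : (zk : ℂ) = c + R * Complex.exp (γ * Complex.I))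
    (hiB : zi.im < t) (hjB : zj.im < t) (hkB : zk.im < t) :
    Real.exp (Real.log (t / zj.im)) =
      (Real.sinh (dist zj zk) / Real.sinh (dist zi zj + dist zj zk)) *
          Real.exp (Real.log (t / zi.im)) +
        (Real.sinh (dist zi zj) / Real.sinh (dist zi zj + dist zj zk)) *
          Real.exp (Real.log (t / zk.im)) := by
  have hβ : β ∈ Set.Ioo 0 π := ⟨lt_trans hα.1 hαβ, lt_trans hβγ hγ.2⟩
  have ha : 0 < Real.tan (α/2) := tan_half_pos _ hα
  have hb : 0 < Real.tan (β/2) := tan_half_pos _ hβ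
  have hg : 0 < Real.tan (γ/2) := tan_half_pos _ hγ
  set a := Real.tan (α/2) with hadef
  set b := Real.tan (β/2) with hbdef
  set g := Real.tan (γ/2) with hgdef
  have hab : a < b := Real.tan_lt_tan_of_nonneg_of_lt_pi_div_two
    (by linarith [hα.1]) (by linarith [hβ.2]) (by linarith)
  have hbg : b < g := Real.tan_lt_tan_of_nonneg_of_lt_pi_div_two
    (by linarith [hβ.1]) (by linarith [hγ.2]) (by linarith)
  have dij : dist zi zj = Real.log (b/a) :=
    dist_on_circle c R hR α β hα hβ hαβ zi zj hi hj
  have djk : dist zj zk = Real.log (g/b) :=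
    dist_on_circle c R hR β γ hβ hγ hβγ zj zk hj hk
  have hsum : dist zi zj + dist zj zk = Real.log (g/a) := by
    rw [dij, djk, ← Real.log_mul (by positivity) (by positivity)]
    congr 1
    field_simp
  have him : zi.im = R * Real.sin α := im_on_circle c R α zi hi
  have hjm : zj.im = R * Real.sin β := im_on_circle c R β zj hj
  have hkm : zk.im = R * Real.sin γ := im_on_circle c R γ zk hk
  have hipos : 0 < zi.im := zi.2
  have hjpos : 0 < zj.im := zj.2
  have hkpos : 0 < zk.im := zk.2
  rw [Real.exp_log (div_pos (by linarith) hipos), Real.exp_log (div_pos (by linarith) hjpos),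
    Real.exp_log (div_pos (by linarith) hkpos), hsum, dij, djk,
    Real.sinh_log (by positivity), Real.sinh_log (by positivity),
    Real.sinh_log (by positivity),
    him, hjm, hkm, sin_half_angle α hα, sin_half_angle β hβ, sin_half_angle γ hγ,
    ← hadef, ← hbdef, ← hgdef]
  have hga1 : (1:ℝ) < g/a := (one_lt_div ha).mpr (by linarith)
  have hga2 : g^2 - a^2 ≠ 0 := by nlinarith
  have hden : (g/a - (g/a)⁻¹)/2 ≠ 0 := by
    have h1 : (g/a)⁻¹ < 1 := inv_lt_one_of_one_lt₀ hga1
    intro h; nlinarith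
  have hY : b*(g^2-a^2) ≠ 0 := by
    apply mul_ne_zero hb.ne' hga2
  have r1 : ((g/b - (g/b)⁻¹)/2) / ((g/a - (g/a)⁻¹)/2) = (a*(g^2-b^2))/(b*(g^2-a^2)) := by
    rw [div_eq_div_iff hden hY]
    field_simp
  have r2 : ((b/a - (b/a)⁻¹)/2) / ((g/a - (g/a)⁻¹)/2) = (g*(b^2-a^2))/(b*(g^2-a^2)) := by
    rw [div_eq_div_iff hden hY]
    field_simp
  rw [r1, r2]
  field_simp [hga2, ha.ne', hb.ne', hg.ne', hR.ne']
  ring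
end

section
/- Let B be a horodisk in ℍ² and L a geodesic line disjoint from B, and let a ∈ L be the point of L nearest to B. Then for every x ∈ L: dist(x, B) = log cosh(dist(x, a)) + dist(a, B). -/
open UpperHalfPlane Real in
/-- Lemma 2.7, in the upper half-plane model.  The horodisk is `B = {im ≥ t}`, the geodesic
`L` is the semicircle of radius `r` centered at `x₀ ∈ ℝ`, disjoint from `B` since `r < t`.
The point of `L` nearest to `B` is its top point `a = x₀ + r·I`, with `dist (a, B) = log (t/r)`,
and the distance from a point `x ∈ L` to `B` is `log (t / im x)`.  Then
`dist (x, B) = log cosh (dist (x, a)) + dist (a, B)`. -/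
theorem dist_to_horodisk_along_geodesic (x₀ r t θ : ℝ) (hr : 0 < r) (hrt : r < t)
    (hθ : θ ∈ Set.Ioo 0 π)
    (x a : ℍ)
    (hx : (x : ℂ) = x₀ + r * Complex.exp (θ * Complex.I))
    (ha : (a : ℂ) = x₀ + r * Complex.I) :
    Real.log (t / x.im) = Real.log (Real.cosh (dist x a)) + Real.log (t / r) := by
  have hsin : 0 < Real.sin θ := Real.sin_pos_of_pos_of_lt_pi hθ.1 hθ.2
  have ht : 0 < t := hr.trans hrt
  have himx : x.im = r * Real.sin θ := by
    have h := congrArg Complex.im hx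
    rw [UpperHalfPlane.coe_im] at h
    simp [Complex.exp_mul_I, Complex.add_im, Complex.mul_im, Complex.cos_ofReal_im,
      Complex.sin_ofReal_re, Complex.cos_ofReal_re, Complex.sin_ofReal_im] at h
    simpa using h
  have hima : a.im = r := by
    have h := congrArg Complex.im ha
    rw [UpperHalfPlane.coe_im] at h
    simpa using h
  have hdist2 : dist (x : ℂ) (a : ℂ) ^ 2 = r ^ 2 * (2 - 2 * Real.sin θ) := by
    rw [Complex.dist_eq, ← Complex.normSq_eq_norm_sq, hx, ha]
    have : (x₀ : ℂ) + r * Complex.exp (θ * Complex.I) - (x₀ + r * Complex.I)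
        = r * (Complex.exp (θ * Complex.I) - Complex.I) := by ring
    rw [this, Complex.normSq_apply]
    simp [Complex.exp_mul_I, Complex.mul_re, Complex.mul_im, Complex.add_re, Complex.add_im,
      Complex.sub_re, Complex.sub_im, Complex.cos_ofReal_re, Complex.sin_ofReal_re,
      Complex.cos_ofReal_im, Complex.sin_ofReal_im]
    have := Real.sin_sq_add_cos_sq θ
    nlinarith [Real.sin_sq_add_cos_sq θ]
  have hcosh : Real.cosh (dist x a) = 1 / Real.sin θ := by
    rw [UpperHalfPlane.cosh_dist, hdist2, himx, hima]
    field_simp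
    ring
  rw [hcosh, himx, ← Real.log_mul (by positivity) (by positivity)]
  congr 1
  rw [one_div, div_eq_mul_inv, div_eq_mul_inv, mul_inv]
  ring
end
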